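/- Let (X,S) be a non-degenerate, involutive and braided set-theoretical solution on a finite set X, and let G be its structure group. Then G is torsion-free: for every a ∈ G and every integer n > 0, aⁿ = 1 implies a = 1. -/

import Mathlib

set_option linter.unusedSectionVars false
set_option maxHeartbeats 1000000


namespace YBE

/-- `(X,S)` is non-degenerate: all the maps `g_x = y ↦ S(x,y).1` and
`f_y = x ↦ S(x,y).2` are bijective. -/
def Nondegenerate {X : Type*} (S : X × X → X × X) : Prop :=
  (∀ x : X, Function.Bijective fun y => (S (x, y)).1) ∧
  (∀ y : X, Function.Bijective fun x => (S (x, y)).2)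

/-- `(X,S)` is involutive: `S ∘ S = id`. -/
def InvolutiveSol {X : Type*} (S : X × X → X × X) : Prop := S ∘ S = id

/-- `S¹² = S × id` on `X × X × X`. -/
def S12 {X : Type*} (S : X × X → X × X) : X × X × X → X × X × X :=
  fun p => ((S (p.1, p.2.1)).1, (S (p.1, p.2.1)).2, p.2.2)

/-- `S²³ = id × S` on `X × X × X`. -/
def S23 {X : Type*} (S : X × X → X × X) : X × X × X → X × X × X :=
  fun p => (p.1, S (p.2.1, p.2.2))

/-- `(X,S)` is braided: `S¹² ∘ S²³ ∘ S¹² = S²³ ∘ S¹² ∘ S²³`. -/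
def BraidedSol {X : Type*} (S : X × X → X × X) : Prop :=
  S12 S ∘ S23 S ∘ S12 S = S23 S ∘ S12 S ∘ S23 S

/-- The map `g_x : y ↦ S(x,y).1`. -/
def gmap {X : Type*} (S : X × X → X × X) (x : X) : X → X := fun y => (S (x, y)).1

/-- The map `f_y : x ↦ S(x,y).2`. -/
def fmap {X : Type*} (S : X × X → X × X) (y : X) : X → X := fun x => (S (x, y)).2

/-- The inverse `g_x⁻¹` of the (bijective) map `g_x`. -/
noncomputable def ginv {X : Type*} [Nonempty X] (S : X × X → X × X) (x : X) : X → X :=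
  Function.invFun (gmap S x)

/-- The inverse `f_y⁻¹` of the (bijective) map `f_y`. -/
noncomputable def finv {X : Type*} [Nonempty X] (S : X × X → X × X) (y : X) : X → X :=
  Function.invFun (fmap S y)

/-- The defining relations of the structure monoid: `x·y = t·z` whenever `S(x,y) = (t,z)`. -/
def ybRel {X : Type*} (S : X × X → X × X) : FreeMonoid X → FreeMonoid X → Prop :=
  fun a b => ∃ x y : X, a = FreeMonoid.of x * FreeMonoid.of y ∧
    b = FreeMonoid.of (S (x, y)).1 * FreeMonoid.of (S (x, y)).2

/-- The structure monoid of `(X,S)`: the monoid presented by generating set `X` and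
relations `x·y = t·z` for each `x,y,t,z` with `S(x,y) = (t,z)`. -/
abbrev StructureMonoid {X : Type*} (S : X × X → X × X) : Type _ :=
  (conGen (ybRel S)).Quotient

/-- The image in the structure monoid of a generator `x ∈ X`. -/
def smi {X : Type*} (S : X × X → X × X) (x : X) : StructureMonoid S :=
  (conGen (ybRel S)).mk' (FreeMonoid.of x)

/-- The defining relations of the structure group, as elements of the free group. -/
def ybGRels {X : Type*} (S : X × X → X × X) : Set (FreeGroup X) :=
  {w | ∃ x y : X, w = FreeGroup.of x * FreeGroup.of y *
    (FreeGroup.of (S (x, y)).1 * FreeGroup.of (S (x, y)).2)⁻¹}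

/-- The structure group of `(X,S)`: the group presented by generating set `X` and
relations `x·y = t·z` for each `x,y,t,z` with `S(x,y) = (t,z)`. -/
abbrev StructureGroup {X : Type*} (S : X × X → X × X) : Type _ :=
  PresentedGroup (ybGRels S)

/-- `a` left-divides `b`. -/
def LDvd {M : Type*} [Monoid M] (a b : M) : Prop := ∃ c, b = a * c

/-- `m` is a right lcm of the family `a`: each `a i` left-divides `m`, and `m`
left-divides every common right multiple of the `a i`. -/
def IsRightLcm {M : Type*} [Monoid M] {ι : Sort*} (a : ι → M) (m : M) : Prop :=
  (∀ i, LDvd (a i) m) ∧ ∀ w, (∀ i, LDvd (a i) w) → LDvd m w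

section Identities


variable {X : Type*} {S : X × X → X × X}

theorem inv_g (hinv : InvolutiveSol S) (x y : X) :
    (S ((S (x, y)).1, (S (x, y)).2)).1 = x := by
  have := congrFun hinv (x, y)
  simp only [Function.comp_apply, id_eq] at this
  rw [show ((S (x,y)).1, (S (x,y)).2) = S (x,y) from rfl, this]

theorem braid_g (hbr : BraidedSol S) (x y z : X) :
    (S ((S (x, y)).1, (S ((S (x, y)).2, z)).1)).1 = (S (x, (S (y, z)).1)).1 := by
  have := congrFun hbr (x, y, z)
  simp only [Function.comp_apply, S12, S23] at this
  exact congrArg (fun p => p.1) this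

end Identities

section E

variable (X : Type*) [Fintype X] [DecidableEq X]

/-- permutation action on `X → ℤ` as an additive automorphism -/
def permAddAut (σ : Equiv.Perm X) : (X → ℤ) ≃+ (X → ℤ) where
  toFun w := w ∘ σ.symm
  invFun w := w ∘ σ
  left_inv w := by funext c; simp
  right_inv w := by funext c; simp
  map_add' w₁ w₂ := rfl

/-- the action as a hom into MulAut of the Multiplicative group -/
def ρ : Equiv.Perm X →* MulAut (Multiplicative (X → ℤ)) where
  toFun σ := AddEquiv.toMultiplicative (permAddAut X σ)
  map_one' := by
    ext w
    rfl
  map_mul' σ τ := by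
    ext w
    rfl

/-- The enveloping group `Z^X ⋊ Sym(X)`. -/
abbrev EE := Multiplicative (X → ℤ) ⋊[ρ X] Equiv.Perm X

end E



section Main

variable {X : Type*} [Fintype X] [DecidableEq X] (S : X × X → X × X)

/-- The permutation `g_x`. -/
noncomputable def gperm (hnd : Nondegenerate S) (x : X) : Equiv.Perm X :=
  Equiv.ofBijective _ (hnd.1 x)

theorem gperm_apply (hnd : Nondegenerate S) (x y : X) :
    gperm S hnd x y = (S (x, y)).1 := rfl

theorem single_comp_symm (σ : Equiv.Perm X) (y : X) :
    (Pi.single y (1 : ℤ)) ∘ σ.symm = Pi.single (σ y) 1 := by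
  funext c
  simp only [Function.comp_apply, Pi.single_apply]
  congr 1
  simp only [eq_iff_iff]
  exact ⟨fun h => by rw [← h]; simp, fun h => by rw [h]; simp⟩

/-- The generators of the enveloping group. -/
noncomputable def gensE (hnd : Nondegenerate S) (x : X) : EE X :=
  ⟨Multiplicative.ofAdd (Pi.single x 1), gperm S hnd x⟩

theorem gensE_left (hnd : Nondegenerate S) (x : X) :
    Multiplicative.toAdd (gensE S hnd x).left = Pi.single x 1 := rfl

theorem rel_E (hnd : Nondegenerate S) (hinv : InvolutiveSol S) (hbr : BraidedSol S)
    (x y : X) : gensE S hnd x * gensE S hnd y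
      = gensE S hnd (S (x, y)).1 * gensE S hnd (S (x, y)).2 := by
  refine SemidirectProduct.ext ?_ ?_
  · show Multiplicative.ofAdd (Pi.single x 1) * (ρ X) (gperm S hnd x)
        (Multiplicative.ofAdd (Pi.single y 1)) = _
    show Multiplicative.ofAdd (Pi.single x 1) *
        Multiplicative.ofAdd ((Pi.single y (1:ℤ)) ∘ (gperm S hnd x).symm) = _
    rw [single_comp_symm, ← ofAdd_add]
    show _ = Multiplicative.ofAdd (Pi.single (S (x,y)).1 1) *
        Multiplicative.ofAdd ((Pi.single (S (x,y)).2 (1:ℤ)) ∘ (gperm S hnd (S (x,y)).1).symm)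
    rw [single_comp_symm, ← ofAdd_add, gperm_apply, gperm_apply, inv_g hinv, add_comm]
  · show gperm S hnd x * gperm S hnd y = gperm S hnd (S (x,y)).1 * gperm S hnd (S (x,y)).2
    apply Equiv.ext
    intro z
    simp only [Equiv.Perm.mul_apply, gperm_apply]
    exact (braid_g hbr x y z).symm

end Main


section Monoid

variable {X : Type*} [Fintype X] [DecidableEq X] (S : X × X → X × X)
  (hnd : Nondegenerate S) (hinv : InvolutiveSol S) (hbr : BraidedSol S)

/-- The monoid homomorphism from the structure monoid to the enveloping group. -/
noncomputable def ΦM : StructureMonoid S →* EE X :=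
  Con.lift _ (FreeMonoid.lift (gensE S hnd)) (by
    apply Con.conGen_le.2
    rintro a b ⟨x, y, rfl, rfl⟩
    rw [Con.ker_rel]
    simp only [map_mul, FreeMonoid.lift_eval_of]
    exact rel_E S hnd hinv hbr x y)

/-- The translation part. -/
noncomputable def piM (m : StructureMonoid S) : X → ℤ :=
  Multiplicative.toAdd ((ΦM S hnd hinv hbr m).left)

/-- The permutation part. -/
noncomputable def sigM (m : StructureMonoid S) : Equiv.Perm X :=
  (ΦM S hnd hinv hbr m).right

theorem PhiM_smi (x : X) : ΦM S hnd hinv hbr (smi S x) = gensE S hnd x := by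
  rw [smi, ΦM, Con.lift_mk', FreeMonoid.lift_eval_of]

theorem piM_one : piM S hnd hinv hbr 1 = 0 := by
  simp [piM, map_one]

theorem sigM_one : sigM S hnd hinv hbr 1 = 1 := by
  simp [sigM, map_one]

theorem piM_mul (m m' : StructureMonoid S) :
    piM S hnd hinv hbr (m * m')
      = piM S hnd hinv hbr m + (piM S hnd hinv hbr m') ∘ (sigM S hnd hinv hbr m).symm := by
  simp only [piM, sigM, map_mul, SemidirectProduct.mul_left]
  rfl

theorem sigM_mul (m m' : StructureMonoid S) :
    sigM S hnd hinv hbr (m * m') = sigM S hnd hinv hbr m * sigM S hnd hinv hbr m' := by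
  simp only [sigM, map_mul, SemidirectProduct.mul_right]

theorem piM_smi (x : X) : piM S hnd hinv hbr (smi S x) = Pi.single x 1 := by
  rw [piM, PhiM_smi]; rfl

theorem sigM_smi (x : X) : sigM S hnd hinv hbr (smi S x) = gperm S hnd x := by
  rw [sigM, PhiM_smi]
  rfl

theorem piM_smi_mul (x : X) (m : StructureMonoid S) :
    piM S hnd hinv hbr (smi S x * m)
      = Pi.single x 1 + (piM S hnd hinv hbr m) ∘ (gperm S hnd x).symm := by
  rw [piM_mul, piM_smi, sigM_smi]

theorem decomp (m : StructureMonoid S) : m = 1 ∨ ∃ (x : X) (m' : StructureMonoid S),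
    m = smi S x * m' := by
  obtain ⟨w, rfl⟩ := Con.mk'_surjective m
  induction w using FreeMonoid.casesOn with
  | one => left; exact map_one _
  | of_mul x xs =>
    right
    exact ⟨x, (conGen (ybRel S)).mk' xs, by rw [map_mul]; rfl⟩

theorem piM_nonneg (m : StructureMonoid S) (c : X) : 0 ≤ piM S hnd hinv hbr m c := by
  obtain ⟨w, rfl⟩ := Con.mk'_surjective m
  induction w using FreeMonoid.recOn generalizing c with
  | one => rw [show ((conGen (ybRel S)).mk' 1 : StructureMonoid S) = 1 from map_one _,
      piM_one]; exact le_refl 0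
  | of_mul x xs IH =>
    rw [map_mul, show (conGen (ybRel S)).mk' (FreeMonoid.of x) = smi S x from rfl,
      piM_smi_mul]
    have h1 : (0:ℤ) ≤ (Pi.single x (1:ℤ) : X → ℤ) c := by
      rw [Pi.single_apply]; split <;> simp
    exact add_nonneg h1 (IH _)

theorem sum_piM_smi_mul (x : X) (m : StructureMonoid S) :
    ∑ c, piM S hnd hinv hbr (smi S x * m) c = 1 + ∑ c, piM S hnd hinv hbr m c := by
  rw [piM_smi_mul]
  simp only [Pi.add_apply, Finset.sum_add_distrib]
  congr 1
  · simp [Pi.single_apply]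
  · exact Equiv.sum_comp (gperm S hnd x).symm _

end Monoid

section Core

variable {X : Type*} [Fintype X] [DecidableEq X] (S : X × X → X × X)
  (hnd : Nondegenerate S) (hinv : InvolutiveSol S) (hbr : BraidedSol S)

theorem smi_rel (x y : X) :
    smi S x * smi S y = smi S (S (x, y)).1 * smi S (S (x, y)).2 := by
  have h : conGen (ybRel S) (FreeMonoid.of x * FreeMonoid.of y)
      (FreeMonoid.of (S (x, y)).1 * FreeMonoid.of (S (x, y)).2) :=
    ConGen.Rel.of _ _ ⟨x, y, rfl, rfl⟩
  simp only [smi, ← map_mul]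
  exact (Con.eq _).mpr h

/-- Degree of a monoid element. -/
noncomputable def degMn (m : StructureMonoid S) : ℕ :=
  (∑ c, piM S hnd hinv hbr m c).toNat

theorem sum_piM_nonneg (m : StructureMonoid S) : 0 ≤ ∑ c, piM S hnd hinv hbr m c :=
  Finset.sum_nonneg fun c _ => piM_nonneg S hnd hinv hbr m c

theorem sum_piM_eq (m : StructureMonoid S) :
    ∑ c, piM S hnd hinv hbr m c = (degMn S hnd hinv hbr m : ℤ) := by
  rw [degMn, Int.toNat_of_nonneg (sum_piM_nonneg S hnd hinv hbr m)]

theorem degMn_one : degMn S hnd hinv hbr 1 = 0 := by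
  simp [degMn, piM_one]

theorem degMn_smi_mul (x : X) (m : StructureMonoid S) :
    degMn S hnd hinv hbr (smi S x * m) = degMn S hnd hinv hbr m + 1 := by
  have h2 := sum_piM_nonneg S hnd hinv hbr m
  rw [degMn, degMn, sum_piM_smi_mul]
  omega

theorem div_of_pos (n : ℕ) : ∀ (m : StructureMonoid S) (y : X),
    degMn S hnd hinv hbr m = n → 0 < piM S hnd hinv hbr m y →
    ∃ m', m = smi S y * m' := by
  induction n using Nat.strong_induction_on with
  | _ n IH =>
    intro m y hdeg hpos
    rcases decomp S m with rfl | ⟨x, m₀, rfl⟩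
    · rw [piM_one] at hpos; exact absurd hpos (by simp)
    · by_cases hxy : x = y
      · exact ⟨m₀, by rw [hxy]⟩
      · rw [piM_smi_mul] at hpos
        have hs : (Pi.single x (1:ℤ) : X → ℤ) y = 0 := by
          rw [Pi.single_apply, if_neg (fun h => hxy h.symm)]
        rw [Pi.add_apply, Function.comp_apply, hs, zero_add] at hpos
        have hlt : degMn S hnd hinv hbr m₀ < n := by
          rw [← hdeg, degMn_smi_mul]; omega
        obtain ⟨m₁, rfl⟩ := IH _ hlt m₀ ((gperm S hnd x).symm y) rfl hpos
        refine ⟨smi S (S (x, (gperm S hnd x).symm y)).2 * m₁, ?_⟩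
        have h1 : (S (x, (gperm S hnd x).symm y)).1 = y := by
          rw [← gperm_apply S hnd, Equiv.apply_symm_apply]
        rw [← mul_assoc, ← mul_assoc, smi_rel S x ((gperm S hnd x).symm y), h1]

theorem div_general (n : ℕ) : ∀ (d m : StructureMonoid S),
    degMn S hnd hinv hbr d = n →
    (∀ c, piM S hnd hinv hbr d c ≤ piM S hnd hinv hbr m c) →
    ∃ e, m = d * e := by
  induction n using Nat.strong_induction_on with
  | _ n IH =>
    intro d m hdeg hle
    rcases decomp S d with rfl | ⟨x, d₀, rfl⟩
    · exact ⟨m, (one_mul m).symm⟩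
    · have hpos : 0 < piM S hnd hinv hbr m x := by
        refine lt_of_lt_of_le ?_ (hle x)
        rw [piM_smi_mul, Pi.add_apply, Function.comp_apply, Pi.single_apply, if_pos rfl]
        have := piM_nonneg S hnd hinv hbr d₀ ((gperm S hnd x).symm x)
        omega
      obtain ⟨m₀, rfl⟩ := div_of_pos S hnd hinv hbr _ m x rfl hpos
      have hle₀ : ∀ c, piM S hnd hinv hbr d₀ c ≤ piM S hnd hinv hbr m₀ c := by
        intro c
        have := hle (gperm S hnd x c)
        rw [piM_smi_mul, piM_smi_mul, Pi.add_apply, Pi.add_apply,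
          Function.comp_apply, Function.comp_apply, Equiv.symm_apply_apply] at this
        omega
      have hlt : degMn S hnd hinv hbr d₀ < n := by
        rw [← hdeg, degMn_smi_mul]; omega
      obtain ⟨e, rfl⟩ := IH _ hlt d₀ m₀ rfl hle₀
      exact ⟨e, by rw [mul_assoc]⟩

theorem piM_inj (n : ℕ) : ∀ (m m' : StructureMonoid S),
    degMn S hnd hinv hbr m = n →
    piM S hnd hinv hbr m = piM S hnd hinv hbr m' → m = m' := by
  induction n using Nat.strong_induction_on with
  | _ n IH =>
    intro m m' hdeg heq
    rcases decomp S m with rfl | ⟨x, m₀, rfl⟩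
    · rcases decomp S m' with rfl | ⟨x, m₁, rfl⟩
      · rfl
      · exfalso
        have := congrFun heq x
        rw [piM_one, piM_smi_mul, Pi.zero_apply, Pi.add_apply, Function.comp_apply,
          Pi.single_apply, if_pos rfl] at this
        have := piM_nonneg S hnd hinv hbr m₁ ((gperm S hnd x).symm x)
        omega
    · have hpos : 0 < piM S hnd hinv hbr m' x := by
        rw [← heq, piM_smi_mul, Pi.add_apply, Function.comp_apply,
          Pi.single_apply, if_pos rfl]
        have := piM_nonneg S hnd hinv hbr m₀ ((gperm S hnd x).symm x)
        omega
      obtain ⟨m₁, rfl⟩ := div_of_pos S hnd hinv hbr _ m' x rfl hpos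
      have heq₀ : piM S hnd hinv hbr m₀ = piM S hnd hinv hbr m₁ := by
        funext c
        have := congrFun heq (gperm S hnd x c)
        rw [piM_smi_mul, piM_smi_mul, Pi.add_apply, Pi.add_apply,
          Function.comp_apply, Function.comp_apply, Equiv.symm_apply_apply] at this
        omega
      have hlt : degMn S hnd hinv hbr m₀ < n := by
        rw [← hdeg, degMn_smi_mul]; omega
      rw [IH _ hlt m₀ m₁ rfl heq₀]

theorem piM_surj (k : ℕ) : ∀ (v : X → ℤ), (∀ c, 0 ≤ v c) → (∑ c, v c) = (k : ℤ) →
    ∃ m, piM S hnd hinv hbr m = v := by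
  induction k with
  | zero =>
    intro v hnn hsum
    refine ⟨1, ?_⟩
    rw [piM_one]
    funext c
    have : ∀ c ∈ Finset.univ, v c = 0 := by
      rw [← Finset.sum_eq_zero_iff_of_nonneg (fun i _ => hnn i)]
      exact_mod_cast hsum
    exact (this c (Finset.mem_univ c)).symm
  | succ k IH =>
    intro v hnn hsum
    have hx : ∃ x, 0 < v x := by
      by_contra h
      push_neg at h
      have : ∑ c, v c = 0 := Finset.sum_eq_zero fun c _ => le_antisymm (h c) (hnn c)
      omega
    obtain ⟨x, hx⟩ := hx
    set v' : X → ℤ := fun c => v (gperm S hnd x c) - (Pi.single x (1:ℤ) : X → ℤ) (gperm S hnd x c)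
      with hv'
    have hnn' : ∀ c, 0 ≤ v' c := by
      intro c
      simp only [hv', Pi.single_apply]
      split
      · next h => rw [h]; omega
      · have := hnn (gperm S hnd x c); omega
    have hsum' : ∑ c, v' c = (k : ℤ) := by
      rw [hv']
      have h1 : ∑ c, (v (gperm S hnd x c) - (Pi.single x (1:ℤ) : X → ℤ) (gperm S hnd x c))
          = ∑ c, (v c - (Pi.single x (1:ℤ) : X → ℤ) c) :=
        Equiv.sum_comp (gperm S hnd x) (fun c => v c - (Pi.single x (1:ℤ) : X → ℤ) c)
      rw [h1, Finset.sum_sub_distrib]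
      have h2 : ∑ c, (Pi.single x (1:ℤ) : X → ℤ) c = 1 := by
        simp [Pi.single_apply]
      rw [h2, hsum]
      push_cast
      ring
    obtain ⟨m', hm'⟩ := IH v' hnn' hsum'
    refine ⟨smi S x * m', ?_⟩
    rw [piM_smi_mul, hm']
    funext c
    simp only [hv', Pi.add_apply, Function.comp_apply, Pi.single_apply,
      Equiv.apply_symm_apply]
    split <;> ring

end Core

section Group

variable {X : Type*} [Fintype X] [DecidableEq X] (S : X × X → X × X)
  (hnd : Nondegenerate S) (hinv : InvolutiveSol S) (hbr : BraidedSol S)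

theorem rel_G (x y : X) :
    (PresentedGroup.of x : StructureGroup S) * PresentedGroup.of y
      = PresentedGroup.of (S (x, y)).1 * PresentedGroup.of (S (x, y)).2 := by
  have hmem : (FreeGroup.of x * FreeGroup.of y *
      (FreeGroup.of (S (x, y)).1 * FreeGroup.of (S (x, y)).2)⁻¹)
        ∈ Subgroup.normalClosure (ybGRels S) :=
    Subgroup.subset_normalClosure ⟨x, y, rfl⟩
  have h1 : PresentedGroup.mk (ybGRels S) (FreeGroup.of x * FreeGroup.of y *
      (FreeGroup.of (S (x, y)).1 * FreeGroup.of (S (x, y)).2)⁻¹) = 1 :=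
    (QuotientGroup.eq_one_iff _).2 hmem
  rw [map_mul, map_mul, map_inv, map_mul, mul_inv_eq_one] at h1
  exact h1

/-- The canonical monoid hom from the structure monoid to the structure group. -/
def theta : StructureMonoid S →* StructureGroup S :=
  Con.lift _ (FreeMonoid.lift (fun x => (PresentedGroup.of x : StructureGroup S))) (by
    apply Con.conGen_le.2
    rintro a b ⟨x, y, rfl, rfl⟩
    rw [Con.ker_rel]
    simp only [map_mul, FreeMonoid.lift_eval_of]
    exact rel_G S x y)

theorem theta_smi (x : X) : theta S (smi S x) = PresentedGroup.of x := by
  rw [smi, theta, Con.lift_mk', FreeMonoid.lift_eval_of]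

/-- The hom from the structure group to the enveloping group. -/
noncomputable def PhiG : StructureGroup S →* EE X :=
  PresentedGroup.toGroup (f := gensE S hnd) (by
    rintro r ⟨x, y, rfl⟩
    rw [map_mul, map_mul, map_inv, map_mul]
    simp only [FreeGroup.lift_apply_of]
    rw [mul_inv_eq_one]
    exact rel_E S hnd hinv hbr x y)

theorem PhiG_theta (m : StructureMonoid S) :
    PhiG S hnd hinv hbr (theta S m) = ΦM S hnd hinv hbr m := by
  obtain ⟨w, rfl⟩ := Con.mk'_surjective m
  induction w using FreeMonoid.recOn with
  | one =>
    rw [show ((conGen (ybRel S)).mk' 1 : StructureMonoid S) = 1 from map_one _,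
      map_one, map_one, map_one]
  | of_mul x xs IH =>
    rw [map_mul]
    rw [show ((conGen (ybRel S)).mk' (FreeMonoid.of x) : StructureMonoid S) = smi S x from rfl]
    simp only [map_mul]
    rw [IH, theta_smi, PhiM_smi]
    congr 1
    rw [PhiG]
    exact PresentedGroup.toGroup.of _

include hnd hinv hbr in
theorem theta_inj {m m' : StructureMonoid S} (h : theta S m = theta S m') : m = m' := by
  have h2 : piM S hnd hinv hbr m = piM S hnd hinv hbr m' := by
    have := congrArg (PhiG S hnd hinv hbr) h
    rw [PhiG_theta, PhiG_theta] at this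
    rw [piM, piM, this]
  exact piM_inj S hnd hinv hbr _ m m' rfl h2

/-- The degree homomorphism. -/
def degG : StructureGroup S →* Multiplicative ℤ :=
  PresentedGroup.toGroup (f := fun _ : X => Multiplicative.ofAdd (1 : ℤ)) (by
    rintro r ⟨x, y, rfl⟩
    rw [map_mul, map_mul, map_inv, map_mul]
    simp only [FreeGroup.lift_apply_of]
    rw [mul_inv_eq_one])

theorem degG_theta (m : StructureMonoid S) :
    Multiplicative.toAdd (degG S (theta S m)) = ∑ c, piM S hnd hinv hbr m c := by
  obtain ⟨w, rfl⟩ := Con.mk'_surjective m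
  induction w using FreeMonoid.recOn with
  | one =>
    rw [show ((conGen (ybRel S)).mk' 1 : StructureMonoid S) = 1 from map_one _,
      map_one, map_one]
    simp [piM_one]
  | of_mul x xs IH =>
    rw [map_mul]
    rw [show ((conGen (ybRel S)).mk' (FreeMonoid.of x) : StructureMonoid S) = smi S x from rfl]
    rw [sum_piM_smi_mul, map_mul, map_mul, theta_smi]
    rw [show degG S (PresentedGroup.of x) = Multiplicative.ofAdd (1:ℤ) from
      PresentedGroup.toGroup.of _]
    rw [toAdd_mul, IH]
    simp

include hnd hinv hbr in
theorem ore (d u : StructureMonoid S) :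
    ∃ e e', d * e = u * e' := by
  set v : X → ℤ := fun c => max (piM S hnd hinv hbr d c) (piM S hnd hinv hbr u c) with hv
  have hnn : ∀ c, 0 ≤ v c := fun c =>
    le_trans (piM_nonneg S hnd hinv hbr d c) (le_max_left _ _)
  have hsum : ∑ c, v c = ((∑ c, v c).toNat : ℤ) :=
    (Int.toNat_of_nonneg (Finset.sum_nonneg fun c _ => hnn c)).symm
  obtain ⟨w, hw⟩ := piM_surj S hnd hinv hbr _ v hnn hsum
  obtain ⟨e, he⟩ := div_general S hnd hinv hbr _ d w rfl
    (fun c => by rw [hw]; exact le_max_left _ _)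
  obtain ⟨e', he'⟩ := div_general S hnd hinv hbr _ u w rfl
    (fun c => by rw [hw]; exact le_max_right _ _)
  exact ⟨e, e', by rw [← he, ← he']⟩

include hnd hinv hbr in
theorem frac_mul (u m u' m' : StructureMonoid S) :
    ∃ U M : StructureMonoid S,
      (theta S u * (theta S m)⁻¹) * (theta S u' * (theta S m')⁻¹)
        = theta S U * (theta S M)⁻¹ := by
  obtain ⟨e, e', hee⟩ := ore S hnd hinv hbr m u'
  refine ⟨u * e, m' * e', ?_⟩
  have h2 : theta S m * theta S e = theta S u' * theta S e' := by
    rw [← map_mul, ← map_mul, hee]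
  have h3 : (theta S m)⁻¹ * theta S u' = theta S e * (theta S e')⁻¹ := by
    rw [inv_mul_eq_iff_eq_mul, ← mul_assoc, h2, mul_assoc, mul_inv_cancel, mul_one]
  calc theta S u * (theta S m)⁻¹ * (theta S u' * (theta S m')⁻¹)
      = theta S u * ((theta S m)⁻¹ * theta S u') * (theta S m')⁻¹ := by group
    _ = theta S u * (theta S e * (theta S e')⁻¹) * (theta S m')⁻¹ := by rw [h3]
    _ = theta S (u * e) * (theta S (m' * e'))⁻¹ := by
        rw [map_mul, map_mul, mul_inv_rev]; group

include hnd hinv hbr in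
theorem fraction (a : StructureGroup S) :
    ∃ u m : StructureMonoid S, a = theta S u * (theta S m)⁻¹ := by
  obtain ⟨w, rfl⟩ := PresentedGroup.mk_surjective (ybGRels S) a
  induction w using FreeGroup.induction_on with
  | C1 => exact ⟨1, 1, by rw [map_one (theta S), inv_one, mul_one, map_one]⟩
  | of x => exact ⟨smi S x, 1, by rw [theta_smi, map_one, inv_one, mul_one]; rfl⟩
  | inv_of x _ =>
    refine ⟨1, smi S x, ?_⟩
    rw [theta_smi, map_one, map_inv, one_mul]
    rfl
  | mul w₁ w₂ h1 h2 =>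
    obtain ⟨u, m, hu⟩ := h1
    obtain ⟨u', m', hu'⟩ := h2
    obtain ⟨U, M, hUM⟩ := frac_mul S hnd hinv hbr u m u' m'
    exact ⟨U, M, by rw [map_mul, hu, hu', hUM]⟩

theorem piM_le_mul (m e : StructureMonoid S) (c : X) :
    piM S hnd hinv hbr m c ≤ piM S hnd hinv hbr (m * e) c := by
  rw [piM_mul, Pi.add_apply, Function.comp_apply]
  have := piM_nonneg S hnd hinv hbr e ((sigM S hnd hinv hbr m).symm c)
  omega

theorem sum_piM_mul (m e : StructureMonoid S) :
    ∑ c, piM S hnd hinv hbr (m * e) c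
      = ∑ c, piM S hnd hinv hbr m c + ∑ c, piM S hnd hinv hbr e c := by
  rw [piM_mul]
  simp only [Pi.add_apply, Finset.sum_add_distrib]
  congr 1
  exact Equiv.sum_comp (sigM S hnd hinv hbr m).symm _

end Group

section MainAux

variable {X : Type*} [Fintype X] [DecidableEq X] (S : X × X → X × X)
  (hnd : Nondegenerate S) (hinv : InvolutiveSol S) (hbr : BraidedSol S)

include hnd hinv hbr in
theorem main_aux (a : StructureGroup S) (n : ℕ) (hn : 0 < n) (han : a ^ n = 1) :
    a = 1 := by
  -- powers are periodic mod `n`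
  have hpow : ∀ j : ℕ, a ^ (j % n) = a ^ j := by
    intro j
    conv_rhs => rw [← Nat.div_add_mod j n]
    rw [pow_add, pow_mul, han, one_pow, one_mul]
  -- the degree of `a` is zero
  have hdeg : degG S a = 1 := by
    have h1 : (degG S a) ^ n = 1 := by rw [← map_pow, han, map_one]
    have h2 := congrArg Multiplicative.toAdd h1
    rw [toAdd_pow, toAdd_one, nsmul_eq_mul] at h2
    have h3 : Multiplicative.toAdd (degG S a) = 0 := by
      rcases mul_eq_zero.1 h2 with h | h
      · exact absurd h (by exact_mod_cast hn.ne')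
      · exact h
    apply Multiplicative.toAdd.injective
    rw [h3, toAdd_one]
  -- write each power as a fraction
  have hfrac : ∀ k : ℕ, ∃ u m : StructureMonoid S,
      a ^ k = theta S u * (theta S m)⁻¹ := fun k => fraction S hnd hinv hbr (a ^ k)
  choose u m hum using hfrac
  -- a common right multiple `b` of the denominators
  set vb : X → ℤ := fun c => ∑ k ∈ Finset.range n, piM S hnd hinv hbr (m k) c with hvb
  have hvbnn : ∀ c, 0 ≤ vb c := fun c =>
    Finset.sum_nonneg fun k _ => piM_nonneg S hnd hinv hbr (m k) c
  obtain ⟨b, hb⟩ := piM_surj S hnd hinv hbr (∑ c, vb c).toNat vb hvbnn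
    (Int.toNat_of_nonneg (Finset.sum_nonneg fun c _ => hvbnn c)).symm
  have hcc : ∀ k : ℕ, ∃ e, k < n → b = m k * e := by
    intro k
    by_cases hk : k < n
    · obtain ⟨e, he⟩ := div_general S hnd hinv hbr _ (m k) b rfl (fun c => by
        rw [hb]
        exact Finset.single_le_sum (f := fun i => piM S hnd hinv hbr (m i) c)
          (fun i _ => piM_nonneg S hnd hinv hbr (m i) c) (Finset.mem_range.2 hk))
      exact ⟨e, fun _ => he⟩
    · exact ⟨1, fun h => absurd h hk⟩
  choose cc hccs using hcc
  -- the sequence of "numerators against the common denominator"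
  set B : ℕ → StructureMonoid S := fun k => u k * cc k with hBdef
  have hB : ∀ k, k < n → theta S (B k) = a ^ k * theta S b := by
    intro k hk
    have h1 : theta S b = theta S (m k) * theta S (cc k) := by
      rw [← map_mul, ← hccs k hk]
    rw [show B k = u k * cc k from rfl, map_mul, hum k, h1]
    group
  -- a common right multiple `L` of the `B k`
  have hne : (Finset.range n).Nonempty := ⟨0, Finset.mem_range.2 hn⟩
  set vL : X → ℤ := fun c =>
    (Finset.range n).sup' hne (fun k => piM S hnd hinv hbr (B k) c) with hvL
  have hvLnn : ∀ c, 0 ≤ vL c := fun c =>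
    le_trans (piM_nonneg S hnd hinv hbr (B 0) c)
      (Finset.le_sup' (fun k => piM S hnd hinv hbr (B k) c) (Finset.mem_range.2 hn))
  obtain ⟨L, hL⟩ := piM_surj S hnd hinv hbr (∑ c, vL c).toNat vL hvLnn
    (Int.toNat_of_nonneg (Finset.sum_nonneg fun c _ => hvLnn c)).symm
  have hdd : ∀ k : ℕ, ∃ e, k < n → L = B k * e := by
    intro k
    by_cases hk : k < n
    · obtain ⟨e, he⟩ := div_general S hnd hinv hbr _ (B k) L rfl (fun c => by
        rw [hL]
        exact Finset.le_sup' (fun i => piM S hnd hinv hbr (B i) c) (Finset.mem_range.2 hk))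
      exact ⟨e, fun _ => he⟩
    · exact ⟨1, fun h => absurd h hk⟩
  choose d hds using hdd
  -- multiplication by `a` permutes the `B k`
  have key : ∀ k, k < n → a * theta S L = theta S (B ((k + 1) % n) * d k) := by
    intro k hk
    calc a * theta S L = a * (theta S (B k) * theta S (d k)) := by
          rw [← map_mul, ← hds k hk]
      _ = (a * theta S (B k)) * theta S (d k) := by rw [mul_assoc]
      _ = (a ^ ((k + 1) % n) * theta S b) * theta S (d k) := by
          rw [hB k hk, hpow (k + 1), ← mul_assoc, ← pow_succ']
      _ = theta S (B ((k + 1) % n)) * theta S (d k) := by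
          rw [hB ((k + 1) % n) (Nat.mod_lt _ hn)]
      _ = theta S (B ((k + 1) % n) * d k) := (map_mul _ _ _).symm
  -- the element `A` with `θ A = a · θ L`
  set A : StructureMonoid S := B (1 % n) * d 0 with hAdef
  have hA : theta S A = a * theta S L := (key 0 hn).symm
  -- every `B j`, `j < n`, left-divides `A`
  have hcover : ∀ j, j < n → ∃ e, A = B j * e := by
    intro j hj
    rcases Nat.eq_zero_or_pos j with rfl | hjpos
    · have hk : n - 1 < n := by omega
      have hmod : (n - 1 + 1) % n = 0 := by
        have h1 : n - 1 + 1 = n := by omega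
        rw [h1, Nat.mod_self]
      refine ⟨d (n - 1), theta_inj S hnd hinv hbr ?_⟩
      rw [hA, key (n - 1) hk, hmod]
    · have hk : j - 1 < n := by omega
      have hmod : (j - 1 + 1) % n = j := by
        have h1 : j - 1 + 1 = j := by omega
        rw [h1, Nat.mod_eq_of_lt hj]
      refine ⟨d (j - 1), theta_inj S hnd hinv hbr ?_⟩
      rw [hA, key (j - 1) hk, hmod]
  -- hence `L` left-divides `A`
  have hLA : ∀ c, piM S hnd hinv hbr L c ≤ piM S hnd hinv hbr A c := by
    intro c
    rw [hL]
    apply Finset.sup'_le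
    intro k hk
    obtain ⟨e, he⟩ := hcover k (Finset.mem_range.1 hk)
    rw [he]
    exact piM_le_mul S hnd hinv hbr (B k) e c
  obtain ⟨e3, he3⟩ := div_general S hnd hinv hbr _ L A rfl hLA
  -- degrees of `A` and `L` agree
  have hsums : ∑ c, piM S hnd hinv hbr A c = ∑ c, piM S hnd hinv hbr L c := by
    calc ∑ c, piM S hnd hinv hbr A c
        = Multiplicative.toAdd (degG S (theta S A)) := (degG_theta S hnd hinv hbr A).symm
      _ = Multiplicative.toAdd (degG S (a * theta S L)) := by rw [hA]
      _ = Multiplicative.toAdd (degG S a * degG S (theta S L)) := by rw [map_mul]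
      _ = Multiplicative.toAdd (degG S (theta S L)) := by rw [hdeg, one_mul]
      _ = ∑ c, piM S hnd hinv hbr L c := degG_theta S hnd hinv hbr L
  -- so the cofactor `e3` is trivial
  have hsum3 : ∑ c, piM S hnd hinv hbr e3 c = 0 := by
    have := sum_piM_mul S hnd hinv hbr L e3
    rw [← he3, hsums] at this
    omega
  have he31 : e3 = 1 := by
    refine piM_inj S hnd hinv hbr _ e3 1 rfl ?_
    rw [piM_one]
    funext c
    rw [Pi.zero_apply]
    exact (Finset.sum_eq_zero_iff_of_nonneg
      (fun i _ => piM_nonneg S hnd hinv hbr e3 i)).1 hsum3 c (Finset.mem_univ c)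
  have hAL : A = L := by rw [he3, he31, mul_one]
  have : a * theta S L = 1 * theta S L := by rw [one_mul, ← hA, hAL]
  exact mul_right_cancel this

end MainAux

/-- The structure group of a non-degenerate, involutive and braided solution on a finite
set is torsion-free. -/
theorem stmt5 {X : Type*} [Finite X] (S : X × X → X × X)
    (hnd : Nondegenerate S) (hinv : InvolutiveSol S) (hbr : BraidedSol S) :
    ∀ a : StructureGroup S, ∀ n : ℕ, 0 < n → a ^ n = 1 → a = 1 := by
  intro a n hn han
  haveI := Fintype.ofFinite X
  classical
  exact main_aux S hnd hinv hbr a n hn han
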